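/- Let σ be a bicolourable chord diagram and φ any framing of σ. Then for all distinct chords x and y that are not interlaced, I_φ(x, y) = card(N(x) ∩ N(y)) in ZMod 2, where N(x) is the set of chords interlaced with x. -/

import Mathlib

set_option maxHeartbeats 1000000


/-- The open cyclic arc `(a, b)` in `ZMod (2n)`: the points `a + s` with `0 < s < t`,
where `t = (b - a).val` is the representative of `b - a` in `[0, 2n)`. -/
def arc (n : ℕ) (a b : ZMod (2 * n)) : Set (ZMod (2 * n)) :=
  {x | ∃ s : ℕ, 0 < s ∧ s < (b - a).val ∧ x = a + (s : ZMod (2 * n))}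

/-- Two chords with endpoints `{x1, x2}` and `{y1, y2}` are interlaced iff exactly
one of `y1`, `y2` lies in the arc `(x1, x2)`. -/
def Interlaced (n : ℕ) (x1 x2 y1 y2 : ZMod (2 * n)) : Prop :=
  Xor' (y1 ∈ arc n x1 x2) (y2 ∈ arc n x1 x2)

/-- The number of chords of `σ` interlaced with the chord `{x, σ x}` (each such
chord has exactly one endpoint in the arc `(x, σ x)`). -/
noncomputable def interNbrCount (n : ℕ) (σ : Equiv.Perm (ZMod (2 * n)))
    (x : ZMod (2 * n)) : ℕ :=
  ({a : ZMod (2 * n) | a ∈ arc n x (σ x) ∧ σ a ∉ arc n x (σ x)}).ncard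

/-- The number of chords of `σ` interlaced with both the chord `{x, σ x}` and the
chord `{y, σ y}` (counted by their unique endpoint in the arc `(x, σ x)`). -/
noncomputable def commonNbrCount (n : ℕ) (σ : Equiv.Perm (ZMod (2 * n)))
    (x y : ZMod (2 * n)) : ℕ :=
  ({a : ZMod (2 * n) | a ∈ arc n x (σ x) ∧ σ a ∉ arc n x (σ x) ∧
      Interlaced n y (σ y) a (σ a)}).ncard

/-- A framing of the chord diagram `σ`, encoded as the set `S` of `∞`-endpoints:
exactly one endpoint of each chord belongs to `S`. -/
def IsFraming (n : ℕ) (σ : Equiv.Perm (ZMod (2 * n))) (S : Set (ZMod (2 * n))) : Prop :=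
  ∀ i, i ∈ S ↔ σ i ∉ S

open scoped Classical in
/-- The `∞`-endpoint of the chord through `i`, for the framing `S`. -/
noncomputable def inftyEnd {n : ℕ} (σ : Equiv.Perm (ZMod (2 * n)))
    (S : Set (ZMod (2 * n))) (i : ZMod (2 * n)) : ZMod (2 * n) :=
  if i ∈ S then i else σ i

open scoped Classical in
/-- The intersection form `I_φ` of the framed chord diagram `σ`, evaluated on the
chords whose `∞`-endpoints are `p` and `q` (so the ordered endpoint pairs are
`(p, σ p)` and `(q, σ q)`): it is `E(x,y)` plus the number of ordered pairs
`(a, σ a)` forming a chord with `a ∈ (p, σ p)` and `σ a ∈ (q, σ q)`, in `ZMod 2`. -/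
noncomputable def interForm (n : ℕ) (σ : Equiv.Perm (ZMod (2 * n)))
    (p q : ZMod (2 * n)) : ZMod 2 :=
  (if Interlaced n p (σ p) q (σ q) then 1 else 0) +
    (({a : ZMod (2 * n) | a ∈ arc n p (σ p) ∧ σ a ∈ arc n q (σ q)}).ncard : ZMod 2)


section auxArcs
variable {n : ℕ} [NeZero (2 * n)]

lemma mem_arc {a b c : ZMod (2 * n)} :
    c ∈ arc n a b ↔ 0 < (c - a).val ∧ (c - a).val < (b - a).val := by
  constructor
  · rintro ⟨s, hs0, hslt, rfl⟩
    have hs2n : s < 2 * n := lt_trans hslt (ZMod.val_lt _)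
    have h : (a + (s : ZMod (2*n)) - a) = (s : ZMod (2*n)) := by ring
    rw [h, ZMod.val_natCast, Nat.mod_eq_of_lt hs2n]
    exact ⟨hs0, hslt⟩
  · rintro ⟨h0, hlt⟩
    exact ⟨(c - a).val, h0, hlt, by rw [ZMod.natCast_rightInverse (c - a)]; ring⟩

lemma left_not_mem_arc {a b : ZMod (2 * n)} : a ∉ arc n a b := by
  rw [mem_arc]; simp

lemma right_not_mem_arc {a b : ZMod (2 * n)} : b ∉ arc n a b := by
  rw [mem_arc]; omega

lemma val_sub_rel (α β γ : ZMod (2 * n)) :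
    (α - β).val + (β - γ).val = (α - γ).val ∨
    (α - β).val + (β - γ).val = (α - γ).val + 2 * n := by
  have h : (α - β) + (β - γ) = α - γ := by ring
  have h2 := ZMod.val_add (α - β) (β - γ)
  rw [h] at h2
  have b1 := ZMod.val_lt (α - β)
  have b2 := ZMod.val_lt (β - γ)
  rcases lt_or_ge ((α - β).val + (β - γ).val) (2 * n) with hlt | hge
  · left; rw [h2, Nat.mod_eq_of_lt hlt]
  · right
    have hx : (α - β).val + (β - γ).val - 2*n < 2*n := by omega
    rw [h2, Nat.mod_eq_sub_mod hge, Nat.mod_eq_of_lt hx]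
    omega

lemma val_sub_eq_zero_iff {a b : ZMod (2 * n)} : (a - b).val = 0 ↔ a = b := by
  rw [ZMod.val_eq_zero, sub_eq_zero]

lemma zmod_eq_iff_val (a b : ZMod (2 * n)) : a = b ↔ (a - b).val = 0 :=
  val_sub_eq_zero_iff.symm

/-- val facts relating a point `a` to the frame `x, x', y, y'`, basepoint `x`. -/
lemma point_facts (x x' y y' a : ZMod (2 * n)) :
    ((a-x').val + (x'-x).val = (a-x).val ∨ (a-x').val + (x'-x).val = (a-x).val + 2*n)
  ∧ ((a-y).val + (y-x).val = (a-x).val ∨ (a-y).val + (y-x).val = (a-x).val + 2*n)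
  ∧ ((a-y').val + (y'-x).val = (a-x).val ∨ (a-y').val + (y'-x).val = (a-x).val + 2*n)
  ∧ (a-x).val < 2*n ∧ (a-x').val < 2*n ∧ (a-y).val < 2*n ∧ (a-y').val < 2*n :=
  ⟨val_sub_rel a x' x, val_sub_rel a y x, val_sub_rel a y' x,
    ZMod.val_lt _, ZMod.val_lt _, ZMod.val_lt _, ZMod.val_lt _⟩

end auxArcs

noncomputable def Ncnt {M : Type*} (σ : M → M) (U V : Set M) : ℕ :=
  {a | a ∈ U ∧ σ a ∈ V}.ncard

section counting
set_option linter.unusedSectionVars false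
variable {M : Type*} [Fintype M] {σ : M → M}

lemma Ncnt_comm (hinv : ∀ i, σ (σ i) = i) (U V : Set M) : Ncnt σ U V = Ncnt σ V U := by
  have hinj : Function.Injective σ := Function.LeftInverse.injective hinv
  have himg : {a | a ∈ V ∧ σ a ∈ U} = σ '' {a | a ∈ U ∧ σ a ∈ V} := by
    ext b
    constructor
    · rintro ⟨hb, hsb⟩
      exact ⟨σ b, ⟨hsb, by rwa [hinv]⟩, hinv b⟩
    · rintro ⟨a, ⟨ha, hsa⟩, rfl⟩
      exact ⟨hsa, by rwa [hinv]⟩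
  unfold Ncnt
  rw [himg, Set.ncard_image_of_injective _ hinj]

lemma Ncnt_union_right {V W : Set M} (h : Disjoint V W) (U : Set M) :
    Ncnt σ U (V ∪ W) = Ncnt σ U V + Ncnt σ U W := by
  unfold Ncnt
  have hsplit : {a | a ∈ U ∧ σ a ∈ V ∪ W} = {a | a ∈ U ∧ σ a ∈ V} ∪ {a | a ∈ U ∧ σ a ∈ W} := by
    ext a; simp only [Set.mem_setOf_eq, Set.mem_union]; tauto
  have hd : Disjoint {a | a ∈ U ∧ σ a ∈ V} {a | a ∈ U ∧ σ a ∈ W} := by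
    rw [Set.disjoint_left]
    rintro a ⟨-, hv⟩ ⟨-, hw⟩
    exact Set.disjoint_left.mp h hv hw
  rw [hsplit, Set.ncard_union_eq hd (Set.toFinite _) (Set.toFinite _)]

lemma Ncnt_eq_zero {U V : Set M} (h : ∀ a ∈ U, σ a ∉ V) : Ncnt σ U V = 0 := by
  unfold Ncnt
  convert Set.ncard_empty M
  ext a; simp only [Set.mem_setOf_eq, Set.mem_empty_iff_false, iff_false]
  rintro ⟨ha, hsa⟩; exact h a ha hsa

lemma Ncnt_self_even (hinv : ∀ i, σ (σ i) = i) {S : Set M} (hS : ∀ i, i ∈ S ↔ σ i ∉ S)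
    (U : Set M) : Even (Ncnt σ U U) := by
  have hinj : Function.Injective σ := Function.LeftInverse.injective hinv
  set T : Set M := {a | a ∈ U ∧ σ a ∈ U} with hT
  have hsplit : T = (T ∩ S) ∪ (T \ S) := by
    ext a; by_cases h : a ∈ S <;> simp [h]
  have himg : T \ S = σ '' (T ∩ S) := by
    ext b
    constructor
    · rintro ⟨⟨hb, hsb⟩, hbs⟩
      refine ⟨σ b, ⟨⟨hsb, by rwa [hinv]⟩, ?_⟩, hinv b⟩
      rw [hS (σ b), hinv]; exact hbs
    · rintro ⟨a, ⟨⟨ha, hsa⟩, haS⟩, rfl⟩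
      refine ⟨⟨hsa, by rwa [hinv]⟩, ?_⟩
      exact (hS a).mp haS
  have hdisj : Disjoint (T ∩ S) (T \ S) := by
    rw [Set.disjoint_left]; rintro a ⟨-, haS⟩ ⟨-, haS'⟩; exact haS' haS
  have h : Ncnt σ U U = (T ∩ S).ncard + (T \ S).ncard := by
    show T.ncard = _
    calc T.ncard = ((T ∩ S) ∪ (T \ S)).ncard := by rw [← hsplit]
    _ = _ := Set.ncard_union_eq hdisj (Set.toFinite _) (Set.toFinite _)
  rw [h, himg, Set.ncard_image_of_injective _ hinj]
  exact ⟨_, rfl⟩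

lemma even_cast_zmod2 {k : ℕ} (h : Even k) : (k : ZMod 2) = 0 := by
  obtain ⟨m, rfl⟩ := h
  push_cast
  rw [← two_mul, show (2 : ZMod 2) = 0 from rfl, zero_mul]

end counting

lemma zmod2_cancel : ∀ u v : ZMod 2, u + v = 0 → u = v := by decide

lemma key {M : Type*} [Fintype M] (σ : M → M) (hinv : ∀ i, σ (σ i) = i)
    {S : Set M} (hS : ∀ i, i ∈ S ↔ σ i ∉ S)
    (x x' y y' : M) (hsx : σ x = x') (hsy : σ y = y')
    (A A' B B' C P Q : Set M)
    (hpt : ∀ a : M,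
      (a ∈ A' ↔ (a ∈ B ∨ a ∈ C ∨ a = y ∨ a = y')) ∧
      (a ∈ B' ↔ (a ∈ A ∨ a ∈ C ∨ a = x ∨ a = x')) ∧
      ¬(a ∈ A ∧ a ∈ A') ∧ ¬(a ∈ B ∧ a ∈ C) ∧
      (a ∈ B → a ≠ y ∧ a ≠ y') ∧ (a ∈ C → a ≠ y ∧ a ≠ y' ∧ a ≠ x ∧ a ≠ x') ∧
      (a ∈ A → a ≠ x ∧ a ≠ x'))
    (hxA' : x ∉ A') (hx'A' : x' ∉ A') (hyB' : y ∉ B') (hy'B' : y' ∉ B')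
    (heA : Even (Ncnt σ A A')) (heB : Even (Ncnt σ B B'))
    (hP : P = A ∨ P = A') (hQ : Q = B ∨ Q = B') :
    (Ncnt σ P Q : ZMod 2) = (Ncnt σ A B : ZMod 2) := by
  have hsx' : σ x' = x := by rw [← hsx, hinv]
  have hsy' : σ y' = y := by rw [← hsy, hinv]
  have hinj : Function.Injective σ := Function.LeftInverse.injective hinv
  -- membership helpers
  have hyA' : y ∈ A' := (hpt y).1.mpr (Or.inr (Or.inr (Or.inl rfl)))
  have hy'A' : y' ∈ A' := (hpt y').1.mpr (Or.inr (Or.inr (Or.inr rfl)))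
  have hxB' : x ∈ B' := (hpt x).2.1.mpr (Or.inr (Or.inr (Or.inl rfl)))
  have hx'B' : x' ∈ B' := (hpt x').2.1.mpr (Or.inr (Or.inr (Or.inr rfl)))
  have hBsub : ∀ a, a ∈ B → a ∈ A' := fun a ha => (hpt a).1.mpr (Or.inl ha)
  have hCsubA' : ∀ a, a ∈ C → a ∈ A' := fun a ha => (hpt a).1.mpr (Or.inr (Or.inl ha))
  have hCsubB' : ∀ a, a ∈ C → a ∈ B' := fun a ha => (hpt a).2.1.mpr (Or.inr (Or.inl ha))
  have hAsubB' : ∀ a, a ∈ A → a ∈ B' := fun a ha => (hpt a).2.1.mpr (Or.inl ha)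
  -- a helper for membership in the pair sets
  have hmempair : ∀ a b c : M, a ∈ ({b, c} : Set M) ↔ a = b ∨ a = c := by
    intro a b c; simp [Set.mem_insert_iff]
  -- resolving σ a ∈ {x, x'} and {y, y'}
  have hresx : ∀ a : M, σ a ∈ ({x, x'} : Set M) → a = x' ∨ a = x := by
    intro a ha
    rcases (hmempair _ _ _).mp ha with h | h
    · left; rw [← hinv a, h, hsx]
    · right; rw [← hinv a, h, hsx']
  have hresy : ∀ a : M, σ a ∈ ({y, y'} : Set M) → a = y' ∨ a = y := by
    intro a ha
    rcases (hmempair _ _ _).mp ha with h | h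
    · left; rw [← hinv a, h, hsy]
    · right; rw [← hinv a, h, hsy']
  -- zero counts
  have zAxx : Ncnt σ A ({x, x'} : Set M) = 0 := by
    refine Ncnt_eq_zero fun a ha hm => ?_
    rcases hresx a hm with rfl | rfl
    · exact ((hpt a).2.2.2.2.2.2 ha).2 rfl
    · exact ((hpt a).2.2.2.2.2.2 ha).1 rfl
  have zAyy : Ncnt σ A ({y, y'} : Set M) = 0 := by
    refine Ncnt_eq_zero fun a ha hm => ?_
    rcases hresy a hm with rfl | rfl
    · exact (hpt a).2.2.1 ⟨ha, hy'A'⟩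
    · exact (hpt a).2.2.1 ⟨ha, hyA'⟩
  have zByy : Ncnt σ B ({y, y'} : Set M) = 0 := by
    refine Ncnt_eq_zero fun a ha hm => ?_
    rcases hresy a hm with rfl | rfl
    · exact ((hpt a).2.2.2.2.1 ha).2 rfl
    · exact ((hpt a).2.2.2.2.1 ha).1 rfl
  have zBxx : Ncnt σ B ({x, x'} : Set M) = 0 := by
    refine Ncnt_eq_zero fun a ha hm => ?_
    rcases hresx a hm with rfl | rfl
    · exact hx'A' (hBsub _ ha)
    · exact hxA' (hBsub _ ha)
  have zCxx : Ncnt σ C ({x, x'} : Set M) = 0 := by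
    refine Ncnt_eq_zero fun a ha hm => ?_
    rcases hresx a hm with rfl | rfl
    · exact ((hpt a).2.2.2.2.2.1 ha).2.2.2 rfl
    · exact ((hpt a).2.2.2.2.2.1 ha).2.2.1 rfl
  have zCyy : Ncnt σ C ({y, y'} : Set M) = 0 := by
    refine Ncnt_eq_zero fun a ha hm => ?_
    rcases hresy a hm with rfl | rfl
    · exact ((hpt a).2.2.2.2.2.1 ha).2.1 rfl
    · exact ((hpt a).2.2.2.2.2.1 ha).1 rfl
  have zA'xx : Ncnt σ A' ({x, x'} : Set M) = 0 := by
    refine Ncnt_eq_zero fun a ha hm => ?_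
    rcases hresx a hm with rfl | rfl
    · exact hx'A' ha
    · exact hxA' ha
  -- disjointness
  have dBC : Disjoint B (C ∪ ({y, y'} : Set M)) := by
    rw [Set.disjoint_left]
    intro a ha hm
    rcases hm with h | h
    · exact (hpt a).2.2.2.1 ⟨ha, h⟩
    · rcases (hmempair _ _ _).mp h with rfl | rfl
      · exact ((hpt a).2.2.2.2.1 ha).1 rfl
      · exact ((hpt a).2.2.2.2.1 ha).2 rfl
  have dCyy : Disjoint C ({y, y'} : Set M) := by
    rw [Set.disjoint_left]
    intro a ha hm
    rcases (hmempair _ _ _).mp hm with rfl | rfl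
    · exact ((hpt a).2.2.2.2.2.1 ha).1 rfl
    · exact ((hpt a).2.2.2.2.2.1 ha).2.1 rfl
  have dAC : Disjoint A (C ∪ ({x, x'} : Set M)) := by
    rw [Set.disjoint_left]
    intro a ha hm
    rcases hm with h | h
    · exact (hpt a).2.2.1 ⟨ha, hCsubA' a h⟩
    · rcases (hmempair _ _ _).mp h with rfl | rfl
      · exact ((hpt a).2.2.2.2.2.2 ha).1 rfl
      · exact ((hpt a).2.2.2.2.2.2 ha).2 rfl
  have dCxx : Disjoint C ({x, x'} : Set M) := by
    rw [Set.disjoint_left]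
    intro a ha hm
    rcases (hmempair _ _ _).mp hm with rfl | rfl
    · exact ((hpt a).2.2.2.2.2.1 ha).2.2.1 rfl
    · exact ((hpt a).2.2.2.2.2.1 ha).2.2.2 rfl
  -- set decompositions
  have hA'eq : A' = B ∪ (C ∪ ({y, y'} : Set M)) := by
    ext a
    rw [Set.mem_union, Set.mem_union, hmempair, (hpt a).1]
  have hB'eq : B' = A ∪ (C ∪ ({x, x'} : Set M)) := by
    ext a
    rw [Set.mem_union, Set.mem_union, hmempair, (hpt a).2.1]
  -- natural number decompositions
  have d1 : Ncnt σ A A' = Ncnt σ A B + (Ncnt σ A C + Ncnt σ A {y, y'}) := by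
    rw [hA'eq, Ncnt_union_right dBC, Ncnt_union_right dCyy]
  have d2 : Ncnt σ A B' = Ncnt σ A A + (Ncnt σ A C + Ncnt σ A {x, x'}) := by
    rw [hB'eq, Ncnt_union_right dAC, Ncnt_union_right dCxx]
  have d3 : Ncnt σ B A' = Ncnt σ B B + (Ncnt σ B C + Ncnt σ B {y, y'}) := by
    rw [hA'eq, Ncnt_union_right dBC, Ncnt_union_right dCyy]
  have d4 : Ncnt σ B B' = Ncnt σ B A + (Ncnt σ B C + Ncnt σ B {x, x'}) := by
    rw [hB'eq, Ncnt_union_right dAC, Ncnt_union_right dCxx]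
  have d5 : Ncnt σ C A' = Ncnt σ C B + (Ncnt σ C C + Ncnt σ C {y, y'}) := by
    rw [hA'eq, Ncnt_union_right dBC, Ncnt_union_right dCyy]
  have d6 : Ncnt σ A' B' = Ncnt σ A' A + (Ncnt σ A' C + Ncnt σ A' {x, x'}) := by
    rw [hB'eq, Ncnt_union_right dAC, Ncnt_union_right dCxx]
  -- pass to ZMod 2
  have eAA' : (Ncnt σ A A' : ZMod 2) = 0 := even_cast_zmod2 heA
  have eBB' : (Ncnt σ B B' : ZMod 2) = 0 := even_cast_zmod2 heB
  have eAA : (Ncnt σ A A : ZMod 2) = 0 := even_cast_zmod2 (Ncnt_self_even hinv hS A)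
  have eBB : (Ncnt σ B B : ZMod 2) = 0 := even_cast_zmod2 (Ncnt_self_even hinv hS B)
  have eCC : (Ncnt σ C C : ZMod 2) = 0 := even_cast_zmod2 (Ncnt_self_even hinv hS C)
  have czAyy : ((Ncnt σ A ({y, y'} : Set M) : ℕ) : ZMod 2) = 0 := by rw [zAyy]; simp
  have czAxx : ((Ncnt σ A ({x, x'} : Set M) : ℕ) : ZMod 2) = 0 := by rw [zAxx]; simp
  have czByy : ((Ncnt σ B ({y, y'} : Set M) : ℕ) : ZMod 2) = 0 := by rw [zByy]; simp
  have czBxx : ((Ncnt σ B ({x, x'} : Set M) : ℕ) : ZMod 2) = 0 := by rw [zBxx]; simp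
  have czCyy : ((Ncnt σ C ({y, y'} : Set M) : ℕ) : ZMod 2) = 0 := by rw [zCyy]; simp
  have czA'xx : ((Ncnt σ A' ({x, x'} : Set M) : ℕ) : ZMod 2) = 0 := by rw [zA'xx]; simp
  have cd1 := congrArg (Nat.cast : ℕ → ZMod 2) d1
  have cd2 := congrArg (Nat.cast : ℕ → ZMod 2) d2
  have cd3 := congrArg (Nat.cast : ℕ → ZMod 2) d3
  have cd4 := congrArg (Nat.cast : ℕ → ZMod 2) d4
  have cd5 := congrArg (Nat.cast : ℕ → ZMod 2) d5
  have cd6 := congrArg (Nat.cast : ℕ → ZMod 2) d6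
  push_cast at cd1 cd2 cd3 cd4 cd5 cd6
  have hcBA : ((Ncnt σ B A : ℕ) : ZMod 2) = ((Ncnt σ A B : ℕ) : ZMod 2) := by
    rw [Ncnt_comm hinv]
  have hcCB : ((Ncnt σ C B : ℕ) : ZMod 2) = ((Ncnt σ B C : ℕ) : ZMod 2) := by
    rw [Ncnt_comm hinv]
  have hcA'A : ((Ncnt σ A' A : ℕ) : ZMod 2) = ((Ncnt σ A A' : ℕ) : ZMod 2) := by
    rw [Ncnt_comm hinv]
  have hcA'C : ((Ncnt σ A' C : ℕ) : ZMod 2) = ((Ncnt σ C A' : ℕ) : ZMod 2) := by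
    rw [Ncnt_comm hinv]
  have hcA'B : ((Ncnt σ A' B : ℕ) : ZMod 2) = ((Ncnt σ B A' : ℕ) : ZMod 2) := by
    rw [Ncnt_comm hinv]
  -- step 1 : (N A C : ZMod 2) = N A B
  have hac : ((Ncnt σ A C : ℕ) : ZMod 2) = ((Ncnt σ A B : ℕ) : ZMod 2) := by
    have h : ((Ncnt σ A B : ℕ) : ZMod 2) + ((Ncnt σ A C : ℕ) : ZMod 2) = 0 := by
      rw [← eAA', cd1, czAyy, add_zero]
    exact zmod2_cancel _ _ (by rwa [add_comm] at h)
  -- step 2 : N A B' = N A B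
  have hab' : ((Ncnt σ A B' : ℕ) : ZMod 2) = ((Ncnt σ A B : ℕ) : ZMod 2) := by
    rw [cd2, eAA, czAxx, add_zero, zero_add, hac]
  -- step 3 : N B C = N A B
  have hbc : ((Ncnt σ B C : ℕ) : ZMod 2) = ((Ncnt σ A B : ℕ) : ZMod 2) := by
    have h : ((Ncnt σ B A : ℕ) : ZMod 2) + ((Ncnt σ B C : ℕ) : ZMod 2) = 0 := by
      rw [← eBB', cd4, czBxx, add_zero]
    rw [← hcBA]
    exact zmod2_cancel _ _ (by rwa [add_comm] at h)
  -- step 4 : N A' B = N A B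
  have ha'b : ((Ncnt σ A' B : ℕ) : ZMod 2) = ((Ncnt σ A B : ℕ) : ZMod 2) := by
    rw [hcA'B, cd3, eBB, czByy, add_zero, zero_add, hbc]
  -- step 5 : N C A' = N A B
  have hca' : ((Ncnt σ C A' : ℕ) : ZMod 2) = ((Ncnt σ A B : ℕ) : ZMod 2) := by
    rw [cd5, eCC, czCyy, add_zero, add_zero, hcCB, hbc]
  -- step 6 : N A' B' = N A B
  have ha'b' : ((Ncnt σ A' B' : ℕ) : ZMod 2) = ((Ncnt σ A B : ℕ) : ZMod 2) := by
    rw [cd6, czA'xx, add_zero, hcA'A, eAA', zero_add, hcA'C, hca']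
  rcases hP with rfl | rfl
  · rcases hQ with rfl | rfl
    · rfl
    · exact hab'
  · rcases hQ with rfl | rfl
    · exact ha'b
    · exact ha'b'


set_option maxHeartbeats 0 in
/-- For a bicolourable chord diagram `σ` (every chord interlaces an even number of
chords) with any framing `S`, and for distinct non-interlaced chords `x`, `y`, the
intersection form equals the number of common interlaced neighbours mod 2. -/
theorem stmt17 (n : ℕ) (hn : 1 ≤ n) (σ : Equiv.Perm (ZMod (2 * n)))
    (hinv : ∀ i, σ (σ i) = i) (hfix : ∀ i, σ i ≠ i)
    (hbic : ∀ x : ZMod (2 * n), Even (interNbrCount n σ x))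
    (S : Set (ZMod (2 * n))) (hS : IsFraming n σ S) :
    ∀ x y : ZMod (2 * n), y ≠ x → y ≠ σ x →
      ¬ Interlaced n x (σ x) y (σ y) →
      interForm n σ (inftyEnd σ S x) (inftyEnd σ S y) =
        (commonNbrCount n σ x y : ZMod 2) := by

  intro x y hyx hyx' hnotint
  haveI : NeZero (2 * n) := ⟨by omega⟩
  have hinj : Function.Injective σ := σ.injective
  have hxx : σ x ≠ x := hfix x
  have hyy : σ y ≠ y := hfix y
  have hy'x : σ y ≠ x := by
    intro h
    exact hyx' ((show σ x = y by rw [← h, hinv]).symm)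
  have hy'x' : σ y ≠ σ x := fun h => hyx (hinj h)
  -- val-level distinctness
  have nzu : (σ x - x).val ≠ 0 := fun h0 => hxx (val_sub_eq_zero_iff.mp h0)
  have nzt : (σ y - y).val ≠ 0 := fun h0 => hyy (val_sub_eq_zero_iff.mp h0)
  have nzt' : (y - σ y).val ≠ 0 := fun h0 => hyy ((val_sub_eq_zero_iff.mp h0).symm)
  have nzv : (y - x).val ≠ 0 := fun h0 => hyx (val_sub_eq_zero_iff.mp h0)
  have nzw : (σ y - x).val ≠ 0 := fun h0 => hy'x (val_sub_eq_zero_iff.mp h0)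
  have nzvx' : (y - σ x).val ≠ 0 := fun h0 => hyx' (val_sub_eq_zero_iff.mp h0)
  have nzwx' : (σ y - σ x).val ≠ 0 := fun h0 => hy'x' (val_sub_eq_zero_iff.mp h0)
  have z0 : (x - x).val = 0 := val_sub_eq_zero_iff.mpr rfl
  have z0y : (y - y).val = 0 := val_sub_eq_zero_iff.mpr rfl
  -- bounds
  have bu : (σ x - x).val < 2*n := ZMod.val_lt _
  have bv : (y - x).val < 2*n := ZMod.val_lt _
  have bw : (σ y - x).val < 2*n := ZMod.val_lt _
  have bt : (σ y - y).val < 2*n := ZMod.val_lt _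
  have bu' : (x - σ x).val < 2*n := ZMod.val_lt _
  have bt' : (y - σ y).val < 2*n := ZMod.val_lt _
  have bvx' : (y - σ x).val < 2*n := ZMod.val_lt _
  have bwx' : (σ y - σ x).val < 2*n := ZMod.val_lt _
  have bxy : (x - y).val < 2*n := ZMod.val_lt _
  have bsxy : (σ x - y).val < 2*n := ZMod.val_lt _
  have bxsy : (x - σ y).val < 2*n := ZMod.val_lt _
  have bsxsy : (σ x - σ y).val < 2*n := ZMod.val_lt _
  -- exact frame relations
  have fu : (x - σ x).val + (σ x - x).val = 2*n := by
    have h := val_sub_rel x (σ x) x; omega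
  have ft : (y - σ y).val + (σ y - y).val = 2*n := by
    have h := val_sub_rel y (σ y) y
    have z : (y - y).val = 0 := z0y
    omega
  have fv : (x - y).val + (y - x).val = 2*n := by
    have h := val_sub_rel x y x; omega
  have fw : (x - σ y).val + (σ y - x).val = 2*n := by
    have h := val_sub_rel x (σ y) x; omega
  have frel : (σ y - y).val + (y - x).val = (σ y - x).val ∨
      (σ y - y).val + (y - x).val = (σ y - x).val + 2*n := val_sub_rel (σ y) y x
  have frel2 : (σ x - y).val + (y - x).val = (σ x - x).val ∨
      (σ x - y).val + (y - x).val = (σ x - x).val + 2*n := val_sub_rel (σ x) y x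
  have frel3 : (σ x - σ y).val + (σ y - x).val = (σ x - x).val ∨
      (σ x - σ y).val + (σ y - x).val = (σ x - x).val + 2*n := val_sub_rel (σ x) (σ y) x
  -- coordinate distinctness
  have nq1 : (y - x).val ≠ (σ x - x).val := by
    have h := val_sub_rel y (σ x) x; omega
  have nq2 : (σ y - x).val ≠ (σ x - x).val := by
    have h := val_sub_rel (σ y) (σ x) x
    have hb : (σ y - σ x).val < 2*n := ZMod.val_lt _
    omega
  have nq3 : (y - x).val ≠ (σ y - x).val := by
    have h := val_sub_rel y (σ y) x; omega
  -- non-interlacing in val form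
  have hni : ¬ ((0 < (y - x).val ∧ (y - x).val < (σ x - x).val) ∧
        ¬(0 < (σ y - x).val ∧ (σ y - x).val < (σ x - x).val) ∨
      (0 < (σ y - x).val ∧ (σ y - x).val < (σ x - x).val) ∧
        ¬(0 < (y - x).val ∧ (y - x).val < (σ x - x).val)) := by
    intro hcon
    apply hnotint
    unfold Interlaced Xor'
    rw [mem_arc, mem_arc]
    exact hcon
  -- links between a and σ a
  have L1 : ∀ a : ZMod (2*n), (a - y).val = 0 ↔ (σ a - σ y).val = 0 := by
    intro a
    rw [val_sub_eq_zero_iff, val_sub_eq_zero_iff]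
    exact ⟨fun h => by rw [h], fun h => hinj h⟩
  have L2 : ∀ a : ZMod (2*n), (a - σ y).val = 0 ↔ (σ a - y).val = 0 := by
    intro a
    rw [val_sub_eq_zero_iff, val_sub_eq_zero_iff]
    constructor
    · intro h; rw [h, hinv]
    · intro h; rw [← h, hinv]
  have L3 : ∀ a : ZMod (2*n), (a - x).val = 0 ↔ (σ a - σ x).val = 0 := by
    intro a
    rw [val_sub_eq_zero_iff, val_sub_eq_zero_iff]
    exact ⟨fun h => by rw [h], fun h => hinj h⟩
  have L4 : ∀ a : ZMod (2*n), (a - σ x).val = 0 ↔ (σ a - x).val = 0 := by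
    intro a
    rw [val_sub_eq_zero_iff, val_sub_eq_zero_iff]
    constructor
    · intro h; rw [h, hinv]
    · intro h; rw [← h, hinv]
  -- evenness from bicolourability
  have hsetAx : {a : ZMod (2*n) | a ∈ arc n x (σ x) ∧ σ a ∈ arc n (σ x) x} =
      {a : ZMod (2*n) | a ∈ arc n x (σ x) ∧ σ a ∉ arc n x (σ x)} := by
    ext a
    have Fa := point_facts x (σ x) y (σ y) a
    have Fsa := point_facts x (σ x) y (σ y) (σ a)
    have l3 := L3 a; have l4 := L4 a
    clear hni frel frel2 frel3
    simp only [Set.mem_setOf_eq, mem_arc]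
    omega
  have heAx : Even (Ncnt (⇑σ) (arc n x (σ x)) (arc n (σ x) x)) := by
    have hb := hbic x
    unfold interNbrCount at hb
    unfold Ncnt
    rw [hsetAx]
    exact hb
  have heAx' : Even (Ncnt (⇑σ) (arc n (σ x) x) (arc n x (σ x))) := by
    rw [Ncnt_comm hinv]; exact heAx
  have hsetBy : {a : ZMod (2*n) | a ∈ arc n y (σ y) ∧ σ a ∈ arc n (σ y) y} =
      {a : ZMod (2*n) | a ∈ arc n y (σ y) ∧ σ a ∉ arc n y (σ y)} := by
    ext a
    have Fa := point_facts x (σ x) y (σ y) a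
    have Fsa := point_facts x (σ x) y (σ y) (σ a)
    have l1 := L1 a; have l2 := L2 a
    clear hni frel2 frel3
    simp only [Set.mem_setOf_eq, mem_arc]
    omega
  have heBy : Even (Ncnt (⇑σ) (arc n y (σ y)) (arc n (σ y) y)) := by
    have hb := hbic y
    unfold interNbrCount at hb
    unfold Ncnt
    rw [hsetBy]
    exact hb
  have heBy' : Even (Ncnt (⇑σ) (arc n (σ y) y) (arc n y (σ y))) := by
    rw [Ncnt_comm hinv]; exact heBy
  -- the E-terms all vanish
  have hE1 : ¬ Interlaced n x (σ x) y (σ y) := hnotint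
  have hE2 : ¬ Interlaced n x (σ x) (σ y) y := by
    unfold Interlaced Xor' Xor
    rw [mem_arc, mem_arc]
    omega
  have hE3 : ¬ Interlaced n (σ x) x y (σ y) := by
    unfold Interlaced Xor' Xor
    rw [mem_arc, mem_arc]
    obtain ⟨r1, -, -, -, b1, -, -⟩ := point_facts x (σ x) y (σ y) y
    obtain ⟨r2, -, -, -, b2, -, -⟩ := point_facts x (σ x) y (σ y) (σ y)
    clear frel frel2 frel3
    omega
  have hE4 : ¬ Interlaced n (σ x) x (σ y) y := by
    unfold Interlaced Xor' Xor
    rw [mem_arc, mem_arc]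
    obtain ⟨r1, -, -, -, b1, -, -⟩ := point_facts x (σ x) y (σ y) y
    obtain ⟨r2, -, -, -, b2, -, -⟩ := point_facts x (σ x) y (σ y) (σ y)
    clear frel frel2 frel3
    omega
  -- main reduction
  suffices hfin : ∀ P Q : Set (ZMod (2*n)),
      (P = arc n x (σ x) ∨ P = arc n (σ x) x) →
      (Q = arc n y (σ y) ∨ Q = arc n (σ y) y) →
      ((Ncnt (⇑σ) P Q : ℕ) : ZMod 2) = ((commonNbrCount n σ x y : ℕ) : ZMod 2) by
    by_cases hxS : x ∈ S
    · have hpx : inftyEnd σ S x = x := by unfold inftyEnd; exact if_pos hxS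
      by_cases hyS : y ∈ S
      · have hqy : inftyEnd σ S y = y := by unfold inftyEnd; exact if_pos hyS
        rw [hpx, hqy]
        unfold interForm
        rw [if_neg hE1, zero_add]
        exact hfin _ _ (Or.inl rfl) (Or.inl rfl)
      · have hqy : inftyEnd σ S y = σ y := by unfold inftyEnd; exact if_neg hyS
        rw [hpx, hqy]
        unfold interForm
        rw [hinv y, if_neg hE2, zero_add]
        exact hfin _ _ (Or.inl rfl) (Or.inr rfl)
    · have hpx : inftyEnd σ S x = σ x := by unfold inftyEnd; exact if_neg hxS
      by_cases hyS : y ∈ S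
      · have hqy : inftyEnd σ S y = y := by unfold inftyEnd; exact if_pos hyS
        rw [hpx, hqy]
        unfold interForm
        rw [hinv x, if_neg hE3, zero_add]
        exact hfin _ _ (Or.inr rfl) (Or.inl rfl)
      · have hqy : inftyEnd σ S y = σ y := by unfold inftyEnd; exact if_neg hyS
        rw [hpx, hqy]
        unfold interForm
        rw [hinv x, hinv y, if_neg hE4, zero_add]
        exact hfin _ _ (Or.inr rfl) (Or.inr rfl)
  intro P Q hP hQ
  by_cases hyA : 0 < (y - x).val ∧ (y - x).val < (σ x - x).val
  · -- y, σ y ∈ arc x (σ x)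
    have hy'A : 0 < (σ y - x).val ∧ (σ y - x).val < (σ x - x).val := by omega
    by_cases hxB : 0 < (x - y).val ∧ (x - y).val < (σ y - y).val
    · -- config TT : x, σ x ∈ arc y (σ y)
      have hpt : ∀ a : ZMod (2*n),
          (a ∈ arc n x (σ x) ↔ (a ∈ arc n (σ y) y ∨ a ∈ (arc n x (σ x) ∩ arc n y (σ y)) ∨ a = y ∨ a = σ y)) ∧
          (a ∈ arc n y (σ y) ↔ (a ∈ arc n (σ x) x ∨ a ∈ (arc n x (σ x) ∩ arc n y (σ y)) ∨ a = x ∨ a = σ x)) ∧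
          ¬(a ∈ arc n (σ x) x ∧ a ∈ arc n x (σ x)) ∧
          ¬(a ∈ arc n (σ y) y ∧ a ∈ (arc n x (σ x) ∩ arc n y (σ y))) ∧
          (a ∈ arc n (σ y) y → a ≠ y ∧ a ≠ σ y) ∧
          (a ∈ (arc n x (σ x) ∩ arc n y (σ y)) → a ≠ y ∧ a ≠ σ y ∧ a ≠ x ∧ a ≠ σ x) ∧
          (a ∈ arc n (σ x) x → a ≠ x ∧ a ≠ σ x) := by
        intro a
        have Fa := point_facts x (σ x) y (σ y) a
        clear hni frel2 frel3
        simp only [ne_eq, Set.mem_inter_iff, mem_arc, zmod_eq_iff_val]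
        omega
      have hcommon : commonNbrCount n σ x y =
          Ncnt (⇑σ) (arc n (σ y) y) (arc n (σ x) x) := by
        unfold commonNbrCount Ncnt Interlaced Xor' Xor
        congr 1
        ext a
        have Fa := point_facts x (σ x) y (σ y) a
        have Fsa := point_facts x (σ x) y (σ y) (σ a)
        have l1 := L1 a; have l2 := L2 a; have l3 := L3 a; have l4 := L4 a
        clear hni frel2 frel3
        simp only [ne_eq, Set.mem_setOf_eq, mem_arc, zmod_eq_iff_val]
        omega
      calc ((Ncnt (⇑σ) P Q : ℕ) : ZMod 2)
          = ((Ncnt (⇑σ) (arc n (σ x) x) (arc n (σ y) y) : ℕ) : ZMod 2) := by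
            exact key (⇑σ) hinv hS x (σ x) y (σ y) rfl rfl
              (arc n (σ x) x) (arc n x (σ x)) (arc n (σ y) y) (arc n y (σ y))
              (arc n x (σ x) ∩ arc n y (σ y)) P Q hpt
              left_not_mem_arc right_not_mem_arc left_not_mem_arc right_not_mem_arc
              heAx' heBy' (Or.symm hP) (Or.symm hQ)
        _ = ((Ncnt (⇑σ) (arc n (σ y) y) (arc n (σ x) x) : ℕ) : ZMod 2) := by
            rw [Ncnt_comm hinv]
        _ = _ := by rw [hcommon]
    · -- config TF : x, σ x ∉ arc y (σ y)
      have hxB2 : (σ y - y).val ≤ (x - y).val := by omega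
      clear hxB
      have hpt : ∀ a : ZMod (2*n),
          (a ∈ arc n x (σ x) ↔ (a ∈ arc n y (σ y) ∨ a ∈ (arc n x (σ x) ∩ arc n (σ y) y) ∨ a = y ∨ a = σ y)) ∧
          (a ∈ arc n (σ y) y ↔ (a ∈ arc n (σ x) x ∨ a ∈ (arc n x (σ x) ∩ arc n (σ y) y) ∨ a = x ∨ a = σ x)) ∧
          ¬(a ∈ arc n (σ x) x ∧ a ∈ arc n x (σ x)) ∧
          ¬(a ∈ arc n y (σ y) ∧ a ∈ (arc n x (σ x) ∩ arc n (σ y) y)) ∧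
          (a ∈ arc n y (σ y) → a ≠ y ∧ a ≠ σ y) ∧
          (a ∈ (arc n x (σ x) ∩ arc n (σ y) y) → a ≠ y ∧ a ≠ σ y ∧ a ≠ x ∧ a ≠ σ x) ∧
          (a ∈ arc n (σ x) x → a ≠ x ∧ a ≠ σ x) := by
        intro a
        have Fa := point_facts x (σ x) y (σ y) a
        clear hni frel2 frel3
        simp only [ne_eq, Set.mem_inter_iff, mem_arc, zmod_eq_iff_val]
        omega
      have hcommon : commonNbrCount n σ x y =
          Ncnt (⇑σ) (arc n y (σ y)) (arc n (σ x) x) := by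
        unfold commonNbrCount Ncnt Interlaced Xor' Xor
        congr 1
        ext a
        have Fa := point_facts x (σ x) y (σ y) a
        have Fsa := point_facts x (σ x) y (σ y) (σ a)
        have l1 := L1 a; have l2 := L2 a; have l3 := L3 a; have l4 := L4 a
        clear hni frel2 frel3
        simp only [ne_eq, Set.mem_setOf_eq, mem_arc, zmod_eq_iff_val]
        omega
      calc ((Ncnt (⇑σ) P Q : ℕ) : ZMod 2)
          = ((Ncnt (⇑σ) (arc n (σ x) x) (arc n y (σ y)) : ℕ) : ZMod 2) := by
            exact key (⇑σ) hinv hS x (σ x) y (σ y) rfl rfl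
              (arc n (σ x) x) (arc n x (σ x)) (arc n y (σ y)) (arc n (σ y) y)
              (arc n x (σ x) ∩ arc n (σ y) y) P Q hpt
              left_not_mem_arc right_not_mem_arc right_not_mem_arc left_not_mem_arc
              heAx' heBy (Or.symm hP) hQ
        _ = ((Ncnt (⇑σ) (arc n y (σ y)) (arc n (σ x) x) : ℕ) : ZMod 2) := by
            rw [Ncnt_comm hinv]
        _ = _ := by rw [hcommon]
  · -- y, σ y ∉ arc x (σ x)
    have hy'A : (σ x - x).val ≤ (σ y - x).val := by omega
    have hyA2 : (σ x - x).val ≤ (y - x).val := by omega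
    clear hyA
    by_cases hxB : 0 < (x - y).val ∧ (x - y).val < (σ y - y).val
    · -- config FT : x, σ x ∈ arc y (σ y)
      have hpt : ∀ a : ZMod (2*n),
          (a ∈ arc n (σ x) x ↔ (a ∈ arc n (σ y) y ∨ a ∈ (arc n (σ x) x ∩ arc n y (σ y)) ∨ a = y ∨ a = σ y)) ∧
          (a ∈ arc n y (σ y) ↔ (a ∈ arc n x (σ x) ∨ a ∈ (arc n (σ x) x ∩ arc n y (σ y)) ∨ a = x ∨ a = σ x)) ∧
          ¬(a ∈ arc n x (σ x) ∧ a ∈ arc n (σ x) x) ∧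
          ¬(a ∈ arc n (σ y) y ∧ a ∈ (arc n (σ x) x ∩ arc n y (σ y))) ∧
          (a ∈ arc n (σ y) y → a ≠ y ∧ a ≠ σ y) ∧
          (a ∈ (arc n (σ x) x ∩ arc n y (σ y)) → a ≠ y ∧ a ≠ σ y ∧ a ≠ x ∧ a ≠ σ x) ∧
          (a ∈ arc n x (σ x) → a ≠ x ∧ a ≠ σ x) := by
        intro a
        have Fa := point_facts x (σ x) y (σ y) a
        clear hni frel2 frel3
        simp only [ne_eq, Set.mem_inter_iff, mem_arc, zmod_eq_iff_val]
        omega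
      have hcommon : commonNbrCount n σ x y =
          Ncnt (⇑σ) (arc n x (σ x)) (arc n (σ y) y) := by
        unfold commonNbrCount Ncnt Interlaced Xor' Xor
        congr 1
        ext a
        have Fa := point_facts x (σ x) y (σ y) a
        have Fsa := point_facts x (σ x) y (σ y) (σ a)
        have l1 := L1 a; have l2 := L2 a; have l3 := L3 a; have l4 := L4 a
        clear hni frel2 frel3
        simp only [ne_eq, Set.mem_setOf_eq, mem_arc, zmod_eq_iff_val]
        omega
      calc ((Ncnt (⇑σ) P Q : ℕ) : ZMod 2)
          = ((Ncnt (⇑σ) (arc n x (σ x)) (arc n (σ y) y) : ℕ) : ZMod 2) := by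
            exact key (⇑σ) hinv hS x (σ x) y (σ y) rfl rfl
              (arc n x (σ x)) (arc n (σ x) x) (arc n (σ y) y) (arc n y (σ y))
              (arc n (σ x) x ∩ arc n y (σ y)) P Q hpt
              right_not_mem_arc left_not_mem_arc left_not_mem_arc right_not_mem_arc
              heAx heBy' hP (Or.symm hQ)
        _ = _ := by rw [hcommon]
    · -- config FF
      have hxB2 : (σ y - y).val ≤ (x - y).val := by omega
      clear hxB
      have hpt : ∀ a : ZMod (2*n),
          (a ∈ arc n (σ x) x ↔ (a ∈ arc n y (σ y) ∨ a ∈ (arc n (σ x) x ∩ arc n (σ y) y) ∨ a = y ∨ a = σ y)) ∧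
          (a ∈ arc n (σ y) y ↔ (a ∈ arc n x (σ x) ∨ a ∈ (arc n (σ x) x ∩ arc n (σ y) y) ∨ a = x ∨ a = σ x)) ∧
          ¬(a ∈ arc n x (σ x) ∧ a ∈ arc n (σ x) x) ∧
          ¬(a ∈ arc n y (σ y) ∧ a ∈ (arc n (σ x) x ∩ arc n (σ y) y)) ∧
          (a ∈ arc n y (σ y) → a ≠ y ∧ a ≠ σ y) ∧
          (a ∈ (arc n (σ x) x ∩ arc n (σ y) y) → a ≠ y ∧ a ≠ σ y ∧ a ≠ x ∧ a ≠ σ x) ∧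
          (a ∈ arc n x (σ x) → a ≠ x ∧ a ≠ σ x) := by
        intro a
        have Fa := point_facts x (σ x) y (σ y) a
        clear hni frel2 frel3
        simp only [ne_eq, Set.mem_inter_iff, mem_arc, zmod_eq_iff_val]
        omega
      have hcommon : commonNbrCount n σ x y =
          Ncnt (⇑σ) (arc n x (σ x)) (arc n y (σ y)) := by
        unfold commonNbrCount Ncnt Interlaced Xor' Xor
        congr 1
        ext a
        have Fa := point_facts x (σ x) y (σ y) a
        have Fsa := point_facts x (σ x) y (σ y) (σ a)
        have l1 := L1 a; have l2 := L2 a; have l3 := L3 a; have l4 := L4 a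
        clear hni frel2 frel3
        simp only [ne_eq, Set.mem_setOf_eq, mem_arc, zmod_eq_iff_val]
        omega
      calc ((Ncnt (⇑σ) P Q : ℕ) : ZMod 2)
          = ((Ncnt (⇑σ) (arc n x (σ x)) (arc n y (σ y)) : ℕ) : ZMod 2) := by
            exact key (⇑σ) hinv hS x (σ x) y (σ y) rfl rfl
              (arc n x (σ x)) (arc n (σ x) x) (arc n y (σ y)) (arc n (σ y) y)
              (arc n (σ x) x ∩ arc n (σ y) y) P Q hpt
              right_not_mem_arc left_not_mem_arc right_not_mem_arc left_not_mem_arc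
              heAx heBy hP hQ
        _ = _ := by rw [hcommon]
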